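/- Let p be an odd prime, r ≥ 2, l ∈ {0,…,p−1}, D_l = {u : 0 ≤ u < p^{r+1}, gcd(u,p)=1, H_{r−1}(u)=l}, and θ an element of an algebraic closure of F₂ with θ^p = 1. Then Σ_{u ∈ D_l} θ^u equals 0 if θ = 1 and equals 1 if θ ≠ 1. -/

import Mathlib

/-- The Euler quotient `Q_t(u)` modulo `p^t`, zero when `gcd(u,p) > 1` (and `Q_0 = 0`). -/
def eulerQuotient (p t u : ℕ) : ℕ :=
  if Nat.Coprime u p then (u ^ (p ^ t).totient - 1) / p ^ t % p ^ t else 0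

/-- The highest-level quotient `H_{r-1}(u) = (Q_r(u) - Q_{r-1}(u))/p^{r-1} mod p`. -/
def levelQuotient (p r u : ℕ) : ℕ :=
  ((((eulerQuotient p r u : ℤ) - (eulerQuotient p (r - 1) u : ℤ)) / (p : ℤ) ^ (r - 1))
    % (p : ℤ)).toNat

lemma binom_lin (u c : ℤ) (n : ℕ) :
    c ^ 2 ∣ (u + c) ^ (n + 1) - u ^ (n + 1) - ((n : ℤ) + 1) * u ^ n * c := by
  induction n with
  | zero => exact ⟨0, by ring⟩
  | succ n ih =>
    obtain ⟨k, hk⟩ := ih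
    refine ⟨(u + c) * k + ((n : ℤ) + 1) * u ^ n, ?_⟩
    push_cast
    linear_combination (u + c) * hk

lemma pow_p_lin {p m : ℕ} (hp : p.Prime) (hodd : Odd p) (hm : 1 ≤ m) {x : ℤ}
    (hx : (p : ℤ) ^ m ∣ x) : (p : ℤ) ^ (2 * m + 1) ∣ (1 + x) ^ p - 1 - p * x := by
  have h3 : 3 ≤ p := by
    have := hp.two_le
    have := Nat.odd_iff.mp hodd
    omega
  have hbin : (1 + x) ^ p = ∑ i ∈ Finset.range (p + 1), x ^ i * 1 ^ (p - i) * (p.choose i) := by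
    rw [add_comm]
    exact add_pow x 1 p
  obtain ⟨n, hn⟩ : ∃ n, p + 1 = n + 2 := ⟨p - 1, by omega⟩
  rw [hbin, hn, Finset.sum_range_succ', Finset.sum_range_succ']
  have : ∀ i ∈ Finset.range n,
      (p : ℤ) ^ (2 * m + 1) ∣ x ^ (i + 1 + 1) * 1 ^ (p - (i + 1 + 1)) * (p.choose (i + 1 + 1)) := by
    intro i hi
    simp only [one_pow, mul_one]
    rcases Nat.lt_or_ge (i + 2) p with h | h
    · have hc : (p : ℤ) ∣ (p.choose (i + 2) : ℤ) :=
        Int.natCast_dvd_natCast.mpr (hp.dvd_choose_self (by omega) h)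
      have hx2 : (p : ℤ) ^ (2 * m) ∣ x ^ (i + 2) := by
        calc (p : ℤ) ^ (2 * m) = ((p:ℤ)^m)^2 := by ring
        _ ∣ x ^ 2 := pow_dvd_pow_of_dvd hx 2
        _ ∣ x ^ (i + 2) := pow_dvd_pow x (by omega)
      have := mul_dvd_mul hx2 hc
      rwa [← pow_succ] at this
    · have hx2 : (p : ℤ) ^ (2 * m + 1) ∣ x ^ (i + 2) := by
        calc (p : ℤ) ^ (2 * m + 1) ∣ ((p:ℤ)^m)^(i+2) := by
              rw [← pow_mul]; exact pow_dvd_pow _ (by nlinarith)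
        _ ∣ x ^ (i + 2) := pow_dvd_pow_of_dvd hx _
      exact hx2.mul_right _
  obtain ⟨k, hk⟩ := Finset.dvd_sum this
  refine ⟨k, ?_⟩
  rw [hk]
  simp [Nat.choose_one_right]
  ring

lemma eulerQuotient_int {p u : ℕ} (t : ℕ) (hp : p.Prime) (hu : u.Coprime p) :
    (eulerQuotient p t u : ℤ) = ((u:ℤ) ^ ((p^t).totient) - 1) / (p:ℤ)^t % (p:ℤ)^t := by
  have hu1 : 1 ≤ u := by
    rcases Nat.eq_zero_or_pos u with h | h
    · subst h; exact absurd (Nat.coprime_zero_left p |>.mp hu) hp.one_lt.ne'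
    · exact h
  have h1 : 1 ≤ u ^ (p^t).totient := Nat.one_le_pow _ _ hu1
  rw [eulerQuotient, if_pos hu]
  push_cast [Nat.cast_sub h1]
  rfl

lemma levelQuotient_int {p r u : ℕ} (hp : p.Prime) :
    (levelQuotient p r u : ℤ) =
      (((eulerQuotient p r u : ℤ) - (eulerQuotient p (r - 1) u : ℤ)) / (p : ℤ) ^ (r - 1)) % p := by
  rw [levelQuotient, Int.toNat_of_nonneg (Int.emod_nonneg _ (by exact_mod_cast hp.ne_zero))]

lemma euler_dvd {p w : ℕ} (t : ℕ) (hp : p.Prime) (hw : w.Coprime p) :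
    (p:ℤ)^t ∣ (w:ℤ) ^ ((p^t).totient) - 1 := by
  have hw1 : 1 ≤ w := by
    rcases Nat.eq_zero_or_pos w with h | h
    · subst h; exact absurd (Nat.coprime_zero_left p |>.mp hw) hp.one_lt.ne'
    · exact h
  have h := Nat.ModEq.pow_totient (hw.pow_right t)
  have h2 := (Nat.modEq_iff_dvd' (Nat.one_le_pow _ _ hw1)).mp h.symm
  have := Int.natCast_dvd_natCast.mpr h2
  push_cast [Nat.cast_sub (Nat.one_le_pow _ _ hw1)] at this
  exact_mod_cast this


lemma key {p r u : ℕ} (hp : p.Prime) (hodd : Odd p) (hr : 2 ≤ r) (hu : u.Coprime p) (t : ℕ) :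
    (levelQuotient p r (u + t * p ^ r) : ℤ) ≡
      (levelQuotient p r u : ℤ) + ((p:ℤ) - 1) * t * (u:ℤ) ^ ((p^r).totient - 1) [ZMOD (p:ℤ)] := by
  obtain ⟨r1, rfl⟩ : ∃ r1, r = r1 + 2 := ⟨r - 2, by omega⟩
  set P : ℤ := (p : ℤ) with hPdef
  have hP0 : P ≠ 0 := by rw [hPdef]; exact_mod_cast hp.ne_zero
  have hq0 : P ^ (r1+1) ≠ 0 := pow_ne_zero _ hP0
  have hpr0 : P ^ (r1+2) ≠ 0 := pow_ne_zero _ hP0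
  set v : ℕ := u + t * p ^ (r1+2) with hvdef
  have hv : v.Coprime p := by
    have h1 : v = u + (t * p^(r1+1)) * p := by rw [hvdef]; ring
    rw [h1]
    exact (Nat.coprime_add_mul_right_left u p _).mpr hu
  -- totients
  set φr : ℕ := (p^(r1+2)).totient with hφrdef
  set φ' : ℕ := (p^(r1+1)).totient with hφ'def
  have hφr : φr = p^(r1+1) * (p-1) := by
    rw [hφrdef, Nat.totient_prime_pow hp (by omega : 0 < r1+2)]
    norm_num
  have hφ' : φ' = p^r1 * (p-1) := by
    rw [hφ'def, Nat.totient_prime_pow hp (by omega : 0 < r1+1)]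
    norm_num
  have hmul : φ' * p = φr := by rw [hφr, hφ']; ring
  have hφrpos : 0 < φr := Nat.totient_pos.mpr (pow_pos hp.pos _)
  have hφ'pos : 0 < φ' := Nat.totient_pos.mpr (pow_pos hp.pos _)
  -- integer quantities
  set F : ℤ := (u:ℤ)^φr - 1 with hFdef
  set G : ℤ := (u:ℤ)^φ' - 1 with hGdef
  set Fv : ℤ := (v:ℤ)^φr - 1 with hFvdef
  set Gv : ℤ := (v:ℤ)^φ' - 1 with hGvdef
  have hdF : P ^ (r1+2) ∣ F := euler_dvd (r1+2) hp hu
  have hdG : P ^ (r1+1) ∣ G := euler_dvd (r1+1) hp hu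
  have hdFv : P ^ (r1+2) ∣ Fv := euler_dvd (r1+2) hp hv
  have hdGv : P ^ (r1+1) ∣ Gv := euler_dvd (r1+1) hp hv
  set A : ℤ := F / P^(r1+2) with hAdef
  set B : ℤ := G / P^(r1+1) with hBdef
  set A' : ℤ := Fv / P^(r1+2) with hA'def
  set B' : ℤ := Gv / P^(r1+1) with hB'def
  have hA : P^(r1+2) * A = F := Int.mul_ediv_cancel' hdF
  have hB : P^(r1+1) * B = G := Int.mul_ediv_cancel' hdG
  have hA' : P^(r1+2) * A' = Fv := Int.mul_ediv_cancel' hdFv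
  have hB' : P^(r1+1) * B' = Gv := Int.mul_ediv_cancel' hdGv
  -- C1 : P^(r1+1) ∣ A - B  (and same for v)
  have hC1gen : ∀ w : ℕ, w.Coprime p → ∀ X Y : ℤ, P^(r1+2) * X = (w:ℤ)^φr - 1 →
      P^(r1+1) * Y = (w:ℤ)^φ' - 1 → ∃ k, X - Y = P^(r1+1) * k := by
    intro w hw X Y hX hY
    have hpowrel : (w:ℤ)^φr = (1 + ((w:ℤ)^φ' - 1))^p := by
      rw [← hmul, pow_mul]; ring_nf
    have hd := pow_p_lin hp hodd (by omega : 1 ≤ r1 + 1) (euler_dvd (r1+1) hp hw)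
    rw [← hφ'def, ← hpowrel] at hd
    obtain ⟨k, hk⟩ := hd
    refine ⟨k, ?_⟩
    have h2 : P^(r1+2) * (X - Y) = P^(r1+2) * (P^(r1+1) * k) := by
      have hexp : P ^ (2 * (r1 + 1) + 1) = P^(r1+2) * P^(r1+1) := by
        rw [← pow_add]; congr 1; omega
      rw [hexp] at hk
      linear_combination hk + hX - P * hY
    exact mul_left_cancel₀ hpr0 h2
  obtain ⟨k, hk⟩ := hC1gen u hu A B hA hB
  obtain ⟨k', hk'⟩ := hC1gen v hv A' B' hA' hB'
  -- C2 : A' - A = φr * t * u^n0 + P^(r1+2) * s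
  obtain ⟨n0, hn0⟩ : ∃ n0, φr = n0 + 1 := ⟨φr - 1, by omega⟩
  have hvcast : (v:ℤ) = (u:ℤ) + (t:ℤ) * P^(r1+2) := by rw [hvdef]; push_cast; ring
  have hbin1 := binom_lin (u:ℤ) ((t:ℤ) * P^(r1+2)) n0
  have hC2 : ∃ s, A' - A = (φr:ℤ) * t * (u:ℤ)^n0 + P^(r1+2) * s := by
    obtain ⟨w, hw⟩ : P^(2*(r1+2)) ∣ ((u:ℤ) + (t:ℤ)*P^(r1+2))^(n0+1) - (u:ℤ)^(n0+1)
        - ((n0:ℤ)+1) * (u:ℤ)^n0 * ((t:ℤ)*P^(r1+2)) := by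
      refine dvd_trans ?_ hbin1
      refine ⟨(t:ℤ)^2, ?_⟩
      rw [show 2*(r1+2) = (r1+2) + (r1+2) by ring, pow_add]
      ring
    refine ⟨w, ?_⟩
    have h2 : P^(r1+2) * (A' - A) = P^(r1+2) * ((φr:ℤ) * t * (u:ℤ)^n0 + P^(r1+2) * w) := by
      have hFv2 : P^(r1+2) * A' = ((u:ℤ) + (t:ℤ)*P^(r1+2))^(n0+1) - 1 := by
        rw [hA', hFvdef, hvcast, hn0]
      have hF2 : P^(r1+2) * A = (u:ℤ)^(n0+1) - 1 := by rw [hA, hFdef, hn0]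
      have hcast : ((n0:ℤ)+1) = (φr:ℤ) := by rw [hn0]; push_cast; ring
      rw [show 2*(r1+2) = (r1+2) + (r1+2) by ring, pow_add] at hw
      rw [mul_sub, hFv2, hF2]
      linear_combination hw + ((t:ℤ)*P^(r1+2)*(u:ℤ)^n0) * hcast
    exact mul_left_cancel₀ hpr0 h2
  obtain ⟨s, hs⟩ := hC2
  -- C3 : B' - B = P^(r1+1) * m
  have hC3 : ∃ m, B' - B = P^(r1+1) * m := by
    obtain ⟨n1, hn1⟩ : ∃ n1, φ' = n1 + 1 := ⟨φ' - 1, by omega⟩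
    have hbin2 := binom_lin (u:ℤ) ((t:ℤ) * P^(r1+2)) n1
    have hd1 : P^(2*(r1+1)) ∣ ((u:ℤ) + (t:ℤ)*P^(r1+2))^(n1+1) - (u:ℤ)^(n1+1)
        - ((n1:ℤ)+1) * (u:ℤ)^n1 * ((t:ℤ)*P^(r1+2)) := by
      refine dvd_trans ?_ hbin2
      refine ⟨(t:ℤ)^2 * P^2, ?_⟩
      rw [show 2*(r1+1) = (r1+1) + (r1+1) by ring, pow_add]
      ring
    have hd2 : P^(2*(r1+1)) ∣ ((n1:ℤ)+1) * (u:ℤ)^n1 * ((t:ℤ)*P^(r1+2)) := by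
      have hcast : ((n1:ℤ)+1) = (φ':ℤ) := by rw [hn1]; push_cast; ring
      have hφ'c : (φ':ℤ) = P^r1 * (P - 1) := by
        rw [hφ']
        push_cast [Nat.cast_sub hp.one_le]
        ring
      refine ⟨(P-1) * (u:ℤ)^n1 * t, ?_⟩
      rw [hcast, hφ'c,
        show 2*(r1+1) = r1 + (r1+2) by ring, pow_add]
      ring
    have hd3 : P^(2*(r1+1)) ∣ Gv - G := by
      have h := dvd_add hd1 hd2
      rw [hGvdef, hGdef, hvcast, hn1]
      convert h using 1
      · rfl
      · ring
    obtain ⟨m, hm⟩ := hd3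
    refine ⟨m, ?_⟩
    have h2 : P^(r1+1) * (B' - B) = P^(r1+1) * (P^(r1+1) * m) := by
      rw [mul_sub, hB, hB']
      rw [show 2*(r1+1) = (r1+1) + (r1+1) by ring, pow_add] at hm
      linear_combination hm
    exact mul_left_cancel₀ hq0 h2
  obtain ⟨m, hm⟩ := hC3
  -- now the emod bookkeeping
  set a1 : ℤ := A / P^(r1+2) with ha1def
  set a1' : ℤ := A' / P^(r1+2) with ha1'def
  set b1 : ℤ := B / P^(r1+1) with hb1def
  have hlqu : (levelQuotient p (r1+2) u : ℤ) = (A % P^(r1+2) - B % P^(r1+1)) / P^(r1+1) % P := by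
    rw [levelQuotient_int hp, eulerQuotient_int (r1+2) hp hu,
      eulerQuotient_int (r1+2-1) hp hu]
    rfl
  have hlqv : (levelQuotient p (r1+2) v : ℤ) = (A' % P^(r1+2) - B' % P^(r1+1)) / P^(r1+1) % P := by
    rw [levelQuotient_int hp, eulerQuotient_int (r1+2) hp hv,
      eulerQuotient_int (r1+2-1) hp hv]
    rfl
  have hb1' : B' / P^(r1+1) = b1 + m := by
    have hBB : B' = B + P^(r1+1) * m := by linarith [hm]
    rw [hBB, Int.add_mul_ediv_left _ _ hq0, hb1def]
  set Ku : ℤ := k - P * a1 + b1 with hKudef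
  set Kv : ℤ := k' - P * a1' + (b1 + m) with hKvdef
  have hsplit : P^(r1+2) = P^(r1+1) * P := by rw [← pow_succ]
  have hnum_u : A % P^(r1+2) - B % P^(r1+1) = P^(r1+1) * Ku := by
    rw [Int.emod_def, Int.emod_def, ← ha1def, ← hb1def, hKudef, hsplit]
    linear_combination hk
  have hnum_v : A' % P^(r1+2) - B' % P^(r1+1) = P^(r1+1) * Kv := by
    rw [Int.emod_def, Int.emod_def, ← ha1'def, hb1', hKvdef, hsplit]
    linear_combination hk'
  have hdivu : (A % P^(r1+2) - B % P^(r1+1)) / P^(r1+1) = Ku := by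
    rw [hnum_u, Int.mul_ediv_cancel_left _ hq0]
  have hdivv : (A' % P^(r1+2) - B' % P^(r1+1)) / P^(r1+1) = Kv := by
    rw [hnum_v, Int.mul_ediv_cancel_left _ hq0]
  -- k' - k
  have hkk : k' - k = (P - 1) * t * (u:ℤ)^n0 + P * s - m := by
    have h2 : P^(r1+1) * (k' - k) = P^(r1+1) * ((P - 1) * t * (u:ℤ)^n0 + P * s - m) := by
      have hφrc : (φr:ℤ) = P^(r1+1) * (P - 1) := by
        rw [hφr]
        push_cast [Nat.cast_sub hp.one_le]
        ring
      calc P^(r1+1) * (k' - k) = (A' - B') - (A - B) := by rw [hk, hk']; ring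
      _ = (A' - A) - (B' - B) := by ring
      _ = (φr:ℤ) * t * (u:ℤ)^n0 + P^(r1+2) * s - P^(r1+1) * m := by rw [hs, hm]
      _ = _ := by rw [hφrc, hsplit]; ring
    exact mul_left_cancel₀ hq0 h2
  -- final
  rw [hlqu, hlqv, hdivu, hdivv]
  have hfin : Kv ≡ Ku + (P - 1) * t * (u:ℤ)^((p^(r1+2)).totient - 1) [ZMOD P] := by
    have hexp : (p^(r1+2)).totient - 1 = n0 := by rw [← hφrdef]; omega
    rw [hexp]
    have hd : Kv - (Ku + (P - 1) * t * (u:ℤ)^n0) = P * (s - a1' + a1) := by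
      rw [hKvdef, hKudef]
      linear_combination hkk
    exact Int.ModEq.symm (Int.modEq_iff_dvd.mpr ⟨s - a1' + a1, hd⟩)
  calc Kv % P ≡ Kv [ZMOD P] := Int.mod_modEq Kv P
  _ ≡ Ku + (P - 1) * t * (u:ℤ)^((p^(r1+2)).totient - 1) [ZMOD P] := hfin
  _ ≡ Ku % P + (P - 1) * t * (u:ℤ)^((p^(r1+2)).totient - 1) [ZMOD P] :=
      Int.ModEq.add_right _ (Int.mod_modEq Ku P).symm

lemma lq_lt {p r u : ℕ} (hp : 0 < p) : levelQuotient p r u < p := by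
  rw [levelQuotient]
  have h1 : (0:ℤ) < p := by exact_mod_cast hp
  have h2 := Int.emod_lt_of_pos
    ((((eulerQuotient p r u : ℤ) - (eulerQuotient p (r - 1) u : ℤ)) / (p : ℤ) ^ (r - 1))) h1
  omega

lemma exists_unique_t {p r u l : ℕ} (hp : p.Prime) (hodd : Odd p) (hr : 2 ≤ r)
    (hu : u.Coprime p) (hl : l < p) :
    ∃! t, t < p ∧ levelQuotient p r (u + t * p ^ r) = l := by
  have hP : Prime (p:ℤ) := Nat.prime_iff_prime_int.mp hp
  have hinj : ∀ t t' : ℕ, t < p → t' < p →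
      levelQuotient p r (u + t * p ^ r) = levelQuotient p r (u + t' * p ^ r) → t = t' := by
    intro t t' ht ht' heq
    have h1 := key hp hodd hr hu t
    have h2 := key hp hodd hr hu t'
    rw [heq] at h1
    have h3 := h2.symm.trans h1
    have h4 := h3.add_left_cancel' (levelQuotient p r u : ℤ)
    have h5 : (p:ℤ) ∣ ((p:ℤ) - 1) * ((u:ℤ) ^ ((p^r).totient - 1)) * ((t:ℤ) - t') := by
      have := Int.ModEq.dvd h4
      convert this using 1
      ring
    have hnd1 : ¬ (p:ℤ) ∣ ((p:ℤ) - 1) := by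
      intro hdvd
      have : (p:ℤ) ∣ 1 := by simpa using dvd_sub dvd_rfl hdvd
      have := Int.le_of_dvd one_pos this
      have := hp.two_le
      omega
    have hnd2 : ¬ (p:ℤ) ∣ (u:ℤ) ^ ((p^r).totient - 1) := by
      intro hdvd
      have hpu : (p:ℤ) ∣ (u:ℤ) := hP.dvd_of_dvd_pow hdvd
      have : (p:ℕ) ∣ u := by exact_mod_cast hpu
      have := Nat.Coprime.eq_one_of_dvd hu.symm this
      have := hp.two_le
      omega
    have h6 : (p:ℤ) ∣ ((t:ℤ) - t') := by
      rcases (hP.dvd_mul.mp h5) with h | h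
      · rcases hP.dvd_mul.mp h with h' | h'
        · exact absurd h' hnd1
        · exact absurd h' hnd2
      · exact h
    have h7 : ((t:ℤ) - t') = 0 := by
      refine Int.eq_zero_of_abs_lt_dvd h6 ?_
      rw [abs_sub_lt_iff]
      constructor <;> [skip; skip] <;> push_cast <;> omega
    omega
  -- surjectivity via injectivity on Fin p
  have hppos := hp.pos
  let f : Fin p → Fin p := fun t => ⟨levelQuotient p r (u + t.1 * p ^ r), lq_lt hppos⟩
  have hfin : Function.Injective f := by
    intro t t' h
    have := hinj t.1 t'.1 t.2 t'.2 (by simpa [f] using congrArg Fin.val h)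
    exact Fin.ext this
  have hsurj : Function.Surjective f := Finite.surjective_of_injective hfin
  obtain ⟨t, ht⟩ := hsurj ⟨l, hl⟩
  refine ⟨t.1, ⟨t.2, by simpa [f] using congrArg Fin.val ht⟩, ?_⟩
  intro t' ⟨ht'1, ht'2⟩
  exact hinj t' t.1 ht'1 t.2 (by rw [ht'2, (by simpa [f] using congrArg Fin.val ht : levelQuotient p r (u + t.1 * p ^ r) = l)])

lemma odd_cast_one {K : Type*} [Ring K] (h2 : (2:K) = 0) {n : ℕ} (h : Odd n) : (n:K) = 1 := by
  obtain ⟨k, rfl⟩ := h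
  push_cast
  rw [h2]
  simp


open Classical in
/-- For `θ` in the algebraic closure of `F₂` with `θ^p = 1`, `Σ_{u ∈ D_l} θ^u`
is `0` if `θ = 1` and `1` otherwise. -/
theorem sum_Dl_pow_theta_p (p r l : ℕ) (hp : p.Prime) (hodd : Odd p) (hr : 2 ≤ r)
    (hl : l < p) (θ : AlgebraicClosure (ZMod 2)) (h1 : θ ^ p = 1) :
    ∑ u ∈ (Finset.range (p ^ (r + 1))).filter
        (fun u => Nat.Coprime u p ∧ levelQuotient p r u = l), θ ^ u
      = if θ = 1 then 0 else 1 := by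
  have hppos := hp.pos
  have h2 : (2 : AlgebraicClosure (ZMod 2)) = 0 := by
    exact_mod_cast CharP.cast_eq_zero (AlgebraicClosure (ZMod 2)) 2
  have hθpr : θ ^ (p ^ r) = 1 := by
    rw [show p ^ r = p * p ^ (r-1) by rw [← pow_succ']; congr 1; omega, pow_mul, h1, one_pow]
  -- selection function
  have hex : ∀ c : ℕ, c.Coprime p → ∃! t, t < p ∧ levelQuotient p r (c + t * p^r) = l :=
    fun c hc => exists_unique_t hp hodd hr hc hl
  set tsel : ℕ → ℕ := fun c => if h : c.Coprime p then (hex c h).exists.choose else 0 with htsel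
  have htspec : ∀ c : ℕ, (hc : c.Coprime p) →
      (tsel c < p ∧ levelQuotient p r (c + tsel c * p^r) = l) ∧
      ∀ t, t < p → levelQuotient p r (c + t * p^r) = l → t = tsel c := by
    intro c hc
    have h := (hex c hc)
    obtain ⟨t0, ht0, huniq⟩ := h
    have hsel : tsel c = t0 := by
      rw [htsel]
      simp only [dif_pos hc]
      exact huniq _ (hex c hc).exists.choose_spec
    refine ⟨by rw [hsel]; exact ht0, fun t ht hlq => ?_⟩
    rw [hsel]
    exact huniq t ⟨ht, hlq⟩
  have hcop_mod : ∀ w : ℕ, w.Coprime p → (w % p ^ r).Coprime p := by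
    intro w hw
    have h1' : ¬ p ∣ w := by
      intro hd
      exact absurd (Nat.Coprime.eq_one_of_dvd ((Nat.coprime_comm).mp hw) hd) hp.one_lt.ne'
    have h2' : ¬ p ∣ w % p ^ r := by
      rw [Nat.dvd_mod_iff (dvd_pow_self p (by omega : r ≠ 0))]
      exact h1'
    exact (Nat.coprime_comm).mp (hp.coprime_iff_not_dvd.mpr h2')
  have hcop_add : ∀ c t : ℕ, c.Coprime p → (c + t * p ^ r).Coprime p := by
    intro c t hc
    rw [show c + t * p ^ r = c + (t * p^(r-1)) * p by
      rw [mul_assoc, ← pow_succ]; congr 3; omega]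
    exact (Nat.coprime_add_mul_right_left c p _).mpr hc
  have hstepA : ∑ u ∈ (Finset.range (p ^ (r + 1))).filter
        (fun u => Nat.Coprime u p ∧ levelQuotient p r u = l), θ ^ u
      = ∑ c ∈ (Finset.range (p ^ r)).filter (fun c => Nat.Coprime c p), θ ^ c := by
    refine Finset.sum_nbij' (fun u => u % p ^ r) (fun c => c + tsel c * p ^ r) ?_ ?_ ?_ ?_ ?_
    · intro u hu
      simp only [Finset.mem_filter, Finset.mem_range] at hu ⊢
      exact ⟨Nat.mod_lt _ (pow_pos hppos r), hcop_mod u hu.2.1⟩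
    · intro c hc
      simp only [Finset.mem_filter, Finset.mem_range] at hc ⊢
      obtain ⟨hclt, hccop⟩ := hc
      obtain ⟨⟨htlt, htlq⟩, _⟩ := htspec c hccop
      refine ⟨?_, hcop_add c _ hccop, htlq⟩
      calc c + tsel c * p ^ r < p ^ r + tsel c * p ^ r := by omega
      _ = (1 + tsel c) * p ^ r := by ring
      _ ≤ p * p ^ r := Nat.mul_le_mul_right _ (by omega)
      _ = p ^ (r + 1) := by rw [← pow_succ']
    · intro u hu
      simp only [Finset.mem_filter, Finset.mem_range] at hu
      obtain ⟨hult, hucop, hulq⟩ := hu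
      set c := u % p ^ r with hcdef
      set t0 := u / p ^ r with ht0def
      have hrec : c + t0 * p ^ r = u := Nat.mod_add_div' u (p ^ r)
      have ht0lt : t0 < p := by
        rw [ht0def]
        rw [Nat.div_lt_iff_lt_mul (pow_pos hppos r), ← pow_succ']
        exact hult
      have hccop := hcop_mod u hucop
      obtain ⟨_, huniq⟩ := htspec c hccop
      have heq := huniq t0 ht0lt (by rw [hrec]; exact hulq)
      show c + tsel c * p ^ r = u
      rw [← heq]
      exact hrec
    · intro c hc
      simp only [Finset.mem_filter, Finset.mem_range] at hc
      show (c + tsel c * p ^ r) % p ^ r = c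
      rw [Nat.add_mul_mod_self_right, Nat.mod_eq_of_lt hc.1]
    · intro u hu
      conv_lhs => rw [← Nat.mod_add_div' u (p ^ r)]
      rw [pow_add, pow_mul', hθpr, one_pow, mul_one]
  rw [hstepA]
  -- step B
  have hsplit := Finset.sum_filter_add_sum_filter_not (Finset.range (p ^ r))
    (fun c => Nat.Coprime c p) (fun c => θ ^ c)
  have hnc : ∑ c ∈ (Finset.range (p ^ r)).filter (fun c => ¬ Nat.Coprime c p), θ ^ c = 1 := by
    have hbij : ∑ c ∈ (Finset.range (p ^ r)).filter (fun c => ¬ Nat.Coprime c p), θ ^ c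
        = ∑ d ∈ Finset.range (p ^ (r - 1)), θ ^ (p * d) := by
      have hdvd_of : ∀ c : ℕ, ¬ c.Coprime p → p ∣ c := by
        intro c hc
        by_contra hnd
        exact hc ((Nat.coprime_comm).mp (hp.coprime_iff_not_dvd.mpr hnd))
      refine Finset.sum_nbij' (fun c => c / p) (fun d => p * d) ?_ ?_ ?_ ?_ ?_
      · intro c hc
        simp only [Finset.mem_filter, Finset.mem_range] at hc ⊢
        rw [Nat.div_lt_iff_lt_mul hppos]
        rw [show p ^ (r-1) * p = p ^ r by rw [← pow_succ]; congr 1; omega]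
        exact hc.1
      · intro d hd
        simp only [Finset.mem_filter, Finset.mem_range] at hd ⊢
        constructor
        · calc p * d < p * p ^ (r-1) := by
                exact (Nat.mul_lt_mul_left hppos).mpr hd
          _ = p ^ r := by rw [← pow_succ']; congr 1; omega
        · intro hco
          exact absurd (Nat.Coprime.eq_one_of_dvd hco.symm (dvd_mul_right p d)) hp.one_lt.ne'
      · intro c hc
        simp only [Finset.mem_filter, Finset.mem_range] at hc
        exact Nat.mul_div_cancel' (hdvd_of c hc.2)
      · intro d _
        exact Nat.mul_div_cancel_left d hppos
      · intro c hc
        simp only [Finset.mem_filter, Finset.mem_range] at hc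
        rw [Nat.mul_div_cancel' (hdvd_of c hc.2)]
    rw [hbij]
    have : ∀ d : ℕ, θ ^ (p * d) = 1 := by
      intro d
      rw [pow_mul, h1, one_pow]
    rw [Finset.sum_congr rfl (fun d _ => this d), Finset.sum_const, Finset.card_range,
      nsmul_eq_mul, mul_one]
    exact odd_cast_one h2 (hodd.pow)
  have hfull : ∑ c ∈ Finset.range (p ^ r), θ ^ c = if θ = 1 then 1 else 0 := by
    split_ifs with hθ
    · subst hθ
      simp only [one_pow, Finset.sum_const, Finset.card_range, nsmul_eq_mul, mul_one]
      exact odd_cast_one h2 (hodd.pow)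
    · rw [geom_sum_eq hθ, hθpr, sub_self, zero_div]
  have hC : ∑ c ∈ (Finset.range (p ^ r)).filter (fun c => Nat.Coprime c p), θ ^ c
      = (if θ = 1 then 1 else 0) - 1 := by
    refine eq_sub_of_add_eq ?_
    rw [← hfull, ← hsplit, hnc]
  rw [hC]
  split_ifs
  · exact sub_self 1
  · rw [zero_sub]
    linear_combination -h2
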